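/- The polynomial y^5 + y·z·t + z^3, quasi-homogeneous of degree 15 in variables y,z,t of weights 3,5,7, is irreducible over an algebraically closed field of characteristic zero. -/

import Mathlib

open MvPolynomial

private lemma primeX0_fin1 (K : Type*) [Field K] :
    Prime (X 0 : MvPolynomial (Fin 1) K) := by
  apply (MulEquiv.prime_iff (MvPolynomial.finSuccEquiv K 0).toMulEquiv).mp
  show Prime ((MvPolynomial.finSuccEquiv K 0) (X 0))
  rw [MvPolynomial.finSuccEquiv_X_zero]
  exact Polynomial.prime_X

private lemma primeX0 (K : Type*) [Field K] :
    Prime (X 0 : MvPolynomial (Fin 2) K) := by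
  apply (MulEquiv.prime_iff (MvPolynomial.finSuccEquiv K 1).toMulEquiv).mp
  show Prime ((MvPolynomial.finSuccEquiv K 1) (X 0))
  rw [MvPolynomial.finSuccEquiv_X_zero]
  exact Polynomial.prime_X

private lemma primeX1 (K : Type*) [Field K] :
    Prime (X 1 : MvPolynomial (Fin 2) K) := by
  apply (MulEquiv.prime_iff (MvPolynomial.finSuccEquiv K 1).toMulEquiv).mp
  show Prime ((MvPolynomial.finSuccEquiv K 1) (X 1))
  have h : (X 1 : MvPolynomial (Fin 2) K) = X (Fin.succ 0) := rfl
  rw [h, MvPolynomial.finSuccEquiv_X_succ]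
  exact Polynomial.prime_C_iff.mpr (primeX0_fin1 K)

private lemma notdvd (K : Type*) [Field K] :
    ¬ (X 0 : MvPolynomial (Fin 2) K) ∣ X 1 := by
  rintro ⟨c, hc⟩
  have := congrArg (MvPolynomial.eval fun j : Fin 2 => if j = 0 then (0 : K) else 1) hc
  simp at this

private lemma key (K : Type*) [Field K] {r : MvPolynomial (Fin 2) K}
    (h1 : r ∣ X 1 * X 0) (h2 : r ∣ (X 1) ^ 5 + (X 0) ^ 3) : IsUnit r := by
  have d0 : r ∣ (X 0 : MvPolynomial (Fin 2) K) ^ 4 := by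
    have := dvd_sub (h2.mul_left (X 0)) (h1.mul_left ((X 1) ^ 4))
    convert this using 1
    ring
  have d1 : r ∣ (X 1 : MvPolynomial (Fin 2) K) ^ 6 := by
    have := dvd_sub (h2.mul_left (X 1)) (h1.mul_left ((X 0) ^ 2))
    convert this using 1
    ring
  obtain ⟨i, hi, hassoc⟩ := (dvd_prime_pow (primeX0 K) 4).mp d0
  match i with
  | 0 =>
    rw [pow_zero] at hassoc
    exact associated_one_iff_isUnit.mp hassoc
  | (j + 1) =>
    exfalso
    have hx0r : (X 0 : MvPolynomial (Fin 2) K) ∣ r :=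
      (dvd_pow_self (X 0 : MvPolynomial (Fin 2) K) (Nat.succ_ne_zero j)).trans
        hassoc.symm.dvd
    have : (X 0 : MvPolynomial (Fin 2) K) ∣ X 1 :=
      (primeX0 K).dvd_of_dvd_pow (hx0r.trans d1)
    exact notdvd K this

private lemma irred_lin (K : Type*) [Field K] :
    Irreducible (Polynomial.C ((X 1 : MvPolynomial (Fin 2) K) * X 0) * Polynomial.X
      + Polynomial.C ((X 1 : MvPolynomial (Fin 2) K) ^ 5 + (X 0) ^ 3)) := by
  set a : MvPolynomial (Fin 2) K := X 1 * X 0 with ha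
  set b : MvPolynomial (Fin 2) K := (X 1) ^ 5 + (X 0) ^ 3 with hb
  have ha0 : a ≠ 0 := mul_ne_zero (X_ne_zero 1) (X_ne_zero 0)
  have hdeg : (Polynomial.C a * Polynomial.X + Polynomial.C b).natDegree = 1 :=
    Polynomial.natDegree_linear ha0
  have hC : ∀ u v : Polynomial (MvPolynomial (Fin 2) K),
      Polynomial.C a * Polynomial.X + Polynomial.C b = u * v → u.natDegree = 0 → IsUnit u := by
    intro u v huv hu
    have hcd : Polynomial.C (u.coeff 0) ∣ Polynomial.C a * Polynomial.X + Polynomial.C b := by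
      rw [huv, ← Polynomial.eq_C_of_natDegree_eq_zero hu]
      exact dvd_mul_right u v
    rw [Polynomial.C_dvd_iff_dvd_coeff] at hcd
    have hdvd1 : u.coeff 0 ∣ a := by simpa using hcd 1
    have hdvd0 : u.coeff 0 ∣ b := by simpa using hcd 0
    have := key K hdvd1 hdvd0
    rw [Polynomial.eq_C_of_natDegree_eq_zero hu]
    exact Polynomial.isUnit_C.mpr this
  constructor
  · intro h
    have := Polynomial.natDegree_eq_zero_of_isUnit h
    omega
  · intro u v huv
    have hu0 : u ≠ 0 := by
      rintro rfl
      simp only [zero_mul] at huv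
      exact (Polynomial.C_ne_zero.mpr ha0) (by
        simpa using congrArg (fun p => Polynomial.coeff p 1) huv)
    have hv0 : v ≠ 0 := by
      rintro rfl
      simp only [mul_zero] at huv
      exact (Polynomial.C_ne_zero.mpr ha0) (by
        simpa using congrArg (fun p => Polynomial.coeff p 1) huv)
    have hsum : u.natDegree + v.natDegree = 1 := by
      rw [← Polynomial.natDegree_mul hu0 hv0, ← huv, hdeg]
    rcases Nat.eq_zero_or_pos u.natDegree with h | h
    · exact Or.inl (hC u v huv h)
    · refine Or.inr (hC v u ?_ (by omega))
      rw [huv, mul_comm]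

theorem stmt_8 (K : Type*) [Field K] [IsAlgClosed K] [CharZero K] :
    Irreducible ((X 0) ^ 5 + (X 0) * (X 1) * (X 2) + (X 1) ^ 3 :
      MvPolynomial (Fin 3) K) := by
  set e := (renameEquiv K (Equiv.swap (0 : Fin 3) 2)).trans (MvPolynomial.finSuccEquiv K 2) with he
  apply (MulEquiv.irreducible_iff e).mp
  have h0 : e (X 0) = Polynomial.C (X 1 : MvPolynomial (Fin 2) K) := by
    have h' : (Equiv.swap (0 : Fin 3) 2) 0 = 2 := Equiv.swap_apply_left 0 2
    have h'' : (X 2 : MvPolynomial (Fin 3) K) = X (Fin.succ 1) := rfl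
    simp [he, renameEquiv_apply, rename_X, h', h'', MvPolynomial.finSuccEquiv_X_succ]
  have h1 : e (X 1) = Polynomial.C (X 0 : MvPolynomial (Fin 2) K) := by
    have h' : (Equiv.swap (0 : Fin 3) 2) 1 = 1 := by decide
    have h'' : (X 1 : MvPolynomial (Fin 3) K) = X (Fin.succ 0) := rfl
    simp [he, renameEquiv_apply, rename_X, h', h'', MvPolynomial.finSuccEquiv_X_succ]
  have h2 : e (X 2) = Polynomial.X := by
    have : (Equiv.swap (0 : Fin 3) 2) 2 = 0 := Equiv.swap_apply_right 0 2
    simp [he, renameEquiv_apply, rename_X, this, MvPolynomial.finSuccEquiv_X_zero]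
  have hep : e ((X 0) ^ 5 + (X 0) * (X 1) * (X 2) + (X 1) ^ 3 : MvPolynomial (Fin 3) K)
      = Polynomial.C ((X 1 : MvPolynomial (Fin 2) K) * X 0) * Polynomial.X
        + Polynomial.C ((X 1 : MvPolynomial (Fin 2) K) ^ 5 + (X 0) ^ 3) := by
    rw [map_add, map_add, map_pow, map_pow, map_mul, map_mul, h0, h1, h2]
    rw [← Polynomial.C_pow, ← Polynomial.C_pow, ← Polynomial.C_mul, Polynomial.C_add]
    ring
  rw [hep]
  exact irred_lin K
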